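/- The generating function of the squared Catalan numbers is given by Σ_{n≥0} c_n² z^n = (1/(πz))E(16z) − ((1−16z)/(2πz))K(16z) − 1/(4z) for real z with 0 < z < 1/16. -/

import Mathlib

open Real intervalIntegral

noncomputable def ellipticK (m : ℝ) : ℝ :=
  ∫ θ in (0:ℝ)..(Real.pi / 2), (Real.sqrt (1 - m * Real.sin θ ^ 2))⁻¹

noncomputable def ellipticE (m : ℝ) : ℝ :=
  ∫ θ in (0:ℝ)..(Real.pi / 2), Real.sqrt (1 - m * Real.sin θ ^ 2)

section CatalanAux
open Real Finset

noncomputable def aa (n : ℕ) : ℝ := (Nat.centralBinom n : ℝ) / 4 ^ n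

lemma aa_zero : aa 0 = 1 := by simp [aa, Nat.centralBinom]

lemma aa_pos (n : ℕ) : 0 < aa n := by
  have h := Nat.centralBinom_pos n
  have h' : (0:ℝ) < (Nat.centralBinom n : ℝ) := by exact_mod_cast h
  unfold aa
  positivity

lemma aa_rec (n : ℕ) : (2 * (n:ℝ) + 2) * aa (n + 1) = (2 * n + 1) * aa n := by
  have h := Nat.succ_mul_centralBinom_succ n
  have h' : ((n:ℝ) + 1) * (Nat.centralBinom (n+1) : ℝ) = 2 * (2 * n + 1) * Nat.centralBinom n := by
    exact_mod_cast congrArg (Nat.cast : ℕ → ℝ) h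
  have h4 : (4:ℝ) ^ (n+1) = 4 * 4 ^ n := by ring
  unfold aa
  rw [h4]
  field_simp
  nlinarith [h', pow_pos (by norm_num : (0:ℝ) < 4) n]

lemma aa_succ (n : ℕ) : aa (n + 1) = (2 * n + 1) / (2 * n + 2) * aa n := by
  have h := aa_rec n
  have hne : (2 * (n:ℝ) + 2) ≠ 0 := by positivity
  field_simp
  linarith [h]

lemma aa_le_one (n : ℕ) : aa n ≤ 1 := by
  induction n with
  | zero => simp [aa_zero]
  | succ n ih =>
    rw [aa_succ]
    have h1 : (2 * (n:ℝ) + 1) / (2 * n + 2) ≤ 1 := by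
      rw [div_le_one (by positivity)]; linarith
    nlinarith [aa_pos n]

lemma sum_aa (n : ℕ) : ∑ k ∈ range (n + 1), aa k * aa (n - k) = 1 := by
  induction n with
  | zero => simp [aa_zero]
  | succ n ih =>
    have key : ∀ m : ℕ, 2 * ∑ k ∈ range (m + 1), (k:ℝ) * (aa k * aa (m - k)) =
        m * ∑ k ∈ range (m + 1), aa k * aa (m - k) := by
      intro m
      have hrefl : ∑ k ∈ range (m + 1), (k:ℝ) * (aa k * aa (m - k)) =
          ∑ k ∈ range (m + 1), ((m - k : ℕ) : ℝ) * (aa (m - k) * aa (m - (m - k))) := by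
        exact (Finset.sum_range_reflect (fun k => ((k:ℝ)) * (aa k * aa (m - k))) (m+1)).symm
      rw [two_mul]
      nth_rewrite 2 [hrefl]
      rw [← Finset.sum_add_distrib, Finset.mul_sum]
      apply Finset.sum_congr rfl
      intro k hk
      have hkm : k ≤ m := by simpa [Nat.lt_succ_iff] using hk
      rw [Nat.sub_sub_self hkm, Nat.cast_sub hkm]
      ring
    -- (n+1) * T(n+1) = (n+1) * T n
    have h1 := key (n + 1)
    have h2 := key n
    have hshift : ∑ k ∈ range (n + 2), 2 * (k:ℝ) * (aa k * aa (n + 1 - k)) =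
        ∑ k ∈ range (n + 1), (2 * (k:ℝ) + 1) * (aa k * aa (n - k)) := by
      rw [Finset.sum_range_succ' (fun k => 2 * (k:ℝ) * (aa k * aa (n + 1 - k))) (n+1)]
      simp only [Nat.cast_zero, mul_zero, zero_mul, add_zero, mul_comm]
      apply Finset.sum_congr rfl
      intro k _
      have : (n + 1 - (k+1)) = n - k := by omega
      rw [this]
      have hr := aa_rec k
      push_cast
      linear_combination aa (n - k) * hr
    have hT1 : ((n:ℝ) + 1) * ∑ k ∈ range (n + 2), aa k * aa (n + 1 - k) =
        ((n:ℝ) + 1) * 1 := by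
      push_cast at h1
      have e1 : ∑ k ∈ range (n + 2), 2 * (k:ℝ) * (aa k * aa (n + 1 - k)) =
          2 * ∑ k ∈ range (n + 2), (k:ℝ) * (aa k * aa (n + 1 - k)) := by
        rw [Finset.mul_sum]; apply Finset.sum_congr rfl; intro k _; ring
      have e2 : ∑ k ∈ range (n + 1), (2 * (k:ℝ) + 1) * (aa k * aa (n - k)) =
          2 * (∑ k ∈ range (n + 1), (k:ℝ) * (aa k * aa (n - k))) +
          ∑ k ∈ range (n + 1), aa k * aa (n - k) := by
        rw [Finset.mul_sum, ← Finset.sum_add_distrib]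
        apply Finset.sum_congr rfl; intro k _; ring
      rw [ih] at e2
      have := hshift
      rw [e1, e2, h1, h2, ih] at this
      linarith
    have hne : ((n:ℝ) + 1) ≠ 0 := by positivity
    have := mul_left_cancel₀ hne hT1
    simpa using this

lemma summable_aux {x : ℝ} (hx0 : 0 ≤ x) (hx1 : x < 1) :
    Summable fun n => ‖aa n * x ^ n‖ := by
  apply Summable.of_nonneg_of_le (fun n => norm_nonneg _) (fun n => ?_)
    (summable_geometric_of_lt_one hx0 hx1)
  rw [Real.norm_eq_abs, abs_of_nonneg (mul_nonneg (aa_pos n).le (pow_nonneg hx0 n))]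
  exact mul_le_of_le_one_left (pow_nonneg hx0 n) (aa_le_one n)

lemma hasSum_inv_sqrt {x : ℝ} (hx0 : 0 ≤ x) (hx1 : x < 1) :
    HasSum (fun n => aa n * x ^ n) ((Real.sqrt (1 - x))⁻¹) := by
  have hnorm : Summable fun n => ‖aa n * x ^ n‖ := summable_aux hx0 hx1
  have hs : Summable fun n => aa n * x ^ n := hnorm.of_norm
  have hL := hs.hasSum
  set L := ∑' n, aa n * x ^ n with hLdef
  have hcauchy := tsum_mul_tsum_eq_tsum_sum_range_of_summable_norm hnorm hnorm
  have hx1' : (0:ℝ) < 1 - x := by linarith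
  have hinner : ∀ n : ℕ, ∑ k ∈ Finset.range (n + 1), (aa k * x ^ k) * (aa (n - k) * x ^ (n - k))
      = x ^ n := by
    intro n
    have : ∀ k ∈ Finset.range (n + 1), (aa k * x ^ k) * (aa (n - k) * x ^ (n - k))
        = (aa k * aa (n - k)) * x ^ n := by
      intro k hk
      have hkn : k ≤ n := by simpa [Nat.lt_succ_iff] using hk
      rw [show (aa k * x ^ k) * (aa (n - k) * x ^ (n - k)) =
        (aa k * aa (n - k)) * (x ^ k * x ^ (n - k)) by ring, ← pow_add,
        Nat.add_sub_cancel' hkn]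
    rw [Finset.sum_congr rfl this, ← Finset.sum_mul, sum_aa, one_mul]
  have hgeom : ∑' n : ℕ, x ^ n = (1 - x)⁻¹ := (hasSum_geometric_of_lt_one hx0 hx1).tsum_eq
  have hsq : L * L = (1 - x)⁻¹ := by
    rw [hcauchy]
    simp_rw [hinner]
    exact hgeom
  have hL1 : (1:ℝ) ≤ L := by
    have := le_hasSum hL 0 (fun i _ => mul_nonneg (aa_pos i).le (pow_nonneg hx0 i))
    simpa [aa_zero] using this
  have hL0 : (0:ℝ) ≤ L := by linarith
  have ht0 : (0:ℝ) ≤ (Real.sqrt (1 - x))⁻¹ := by positivity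
  have htsq : (Real.sqrt (1 - x))⁻¹ * (Real.sqrt (1 - x))⁻¹ = (1 - x)⁻¹ := by
    rw [← mul_inv, Real.mul_self_sqrt (le_of_lt hx1')]
  have : L = (Real.sqrt (1 - x))⁻¹ := by
    have h1 : L ^ 2 = ((Real.sqrt (1 - x))⁻¹) ^ 2 := by
      rw [sq, sq, hsq, htsq]
    calc L = Real.sqrt (L ^ 2) := (Real.sqrt_sq hL0).symm
    _ = Real.sqrt (((Real.sqrt (1 - x))⁻¹) ^ 2) := by rw [h1]
    _ = (Real.sqrt (1 - x))⁻¹ := Real.sqrt_sq ht0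
  rwa [this] at hL

lemma hasSum_sqrt {x : ℝ} (hx0 : 0 ≤ x) (hx1 : x < 1) :
    HasSum (fun n => aa n / (1 - 2 * (n:ℝ)) * x ^ n) (Real.sqrt (1 - x)) := by
  have h := hasSum_inv_sqrt hx0 hx1
  set L := (Real.sqrt (1 - x))⁻¹ with hLdef
  have h1 : HasSum (fun n => aa (n + 1) * x ^ (n + 1)) (L - 1) := by
    rw [hasSum_nat_add_iff (f := fun n => aa n * x ^ n) 1]
    simpa [aa_zero] using h
  have hv : HasSum (fun n => aa n * x ^ n * x) (L * x) := h.mul_right x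
  have h2 := h1.sub hv
  have heq : (fun n => aa (n + 1) * x ^ (n + 1) - aa n * x ^ n * x) =
      fun n => aa (n + 1) / (1 - 2 * ((n:ℝ) + 1)) * x ^ (n + 1) := by
    funext n
    have hr := aa_rec n
    have hne : (1 - 2 * ((n:ℝ) + 1)) ≠ 0 := by
      intro hc; nlinarith [Nat.cast_nonneg (α := ℝ) n]
    have key : aa (n + 1) - aa n = aa (n + 1) / (1 - 2 * ((n:ℝ) + 1)) := by
      field_simp
      nlinarith [hr]
    calc aa (n + 1) * x ^ (n + 1) - aa n * x ^ n * x
        = (aa (n + 1) - aa n) * x ^ (n + 1) := by ring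
      _ = aa (n + 1) / (1 - 2 * ((n:ℝ) + 1)) * x ^ (n + 1) := by rw [key]
  rw [heq] at h2
  have h3 := (hasSum_nat_add_iff (f := fun n => aa n / (1 - 2 * (n:ℝ)) * x ^ n) 1).mp
    (by convert h2 using 2 with n; push_cast; ring_nf)
  have hx1' : (0:ℝ) < 1 - x := by linarith
  have hfin : L - 1 - L * x + ∑ i ∈ Finset.range 1, aa i / (1 - 2 * (i:ℝ)) * x ^ i
      = Real.sqrt (1 - x) := by
    simp only [Finset.sum_range_one, Nat.cast_zero, mul_zero, sub_zero, pow_zero, mul_one,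
      aa_zero, div_one]
    have hs0 : Real.sqrt (1 - x) > 0 := Real.sqrt_pos.mpr hx1'
    rw [hLdef]
    field_simp
    nlinarith [Real.sq_sqrt hx1'.le]
  rwa [hfin] at h3

lemma wallis (n : ℕ) : ∫ θ in (0:ℝ)..(π/2), Real.sin θ ^ (2*n) = π/2 * aa n := by
  induction n with
  | zero => simp [aa_zero]
  | succ n ih =>
    have h := integral_sin_pow (a := 0) (b := π/2) (2*n)
    have h2 : 2 * (n + 1) = 2 * n + 2 := by ring
    rw [h2, h]
    simp only [Real.sin_zero, Real.cos_pi_div_two, Real.sin_pi_div_two, Real.cos_zero]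
    rw [zero_pow (by omega), ih, aa_succ]
    push_cast
    ring

lemma hasSum_elliptic_aux (c : ℕ → ℝ) (hc : ∀ n, |c n| ≤ aa n) {m : ℝ}
    (hm0 : 0 ≤ m) (hm1 : m < 1) (g : ℝ → ℝ)
    (hg : ∀ θ : ℝ, HasSum (fun n => c n * (m * Real.sin θ ^ 2) ^ n) (g θ)) :
    HasSum (fun n => π/2 * (c n * aa n) * m ^ n) (∫ θ in (0:ℝ)..(π/2), g θ) := by
  have hpi2 : (0:ℝ) ≤ π/2 := by positivity
  set F : ℕ → ℝ → ℝ := fun n θ => c n * (m * Real.sin θ ^ 2) ^ n with hF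
  have hcont : ∀ n, Continuous (F n) := by intro n; fun_prop
  have hFint : ∀ n, MeasureTheory.Integrable (F n)
      (MeasureTheory.volume.restrict (Set.Ioc 0 (π/2))) := fun n =>
    (hcont n).integrableOn_Ioc
  have hWal : ∀ n : ℕ, (∫ θ in (0:ℝ)..(π/2), (Real.sin θ ^ 2) ^ n) = π/2 * aa n := by
    intro n
    rw [← wallis n]
    apply intervalIntegral.integral_congr
    intro θ _
    show (Real.sin θ ^ 2) ^ n = Real.sin θ ^ (2 * n)
    rw [pow_mul]
  have hIval : ∀ n : ℕ, (∫ θ in Set.Ioc (0:ℝ) (π/2), F n θ) = π/2 * (c n * aa n) * m ^ n := by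
    intro n
    rw [← intervalIntegral.integral_of_le hpi2]
    have : (∫ θ in (0:ℝ)..(π/2), F n θ) = c n * m ^ n * ∫ θ in (0:ℝ)..(π/2), (Real.sin θ ^ 2) ^ n := by
      rw [← intervalIntegral.integral_const_mul]
      apply intervalIntegral.integral_congr
      intro θ _
      simp only [hF, mul_pow]
      ring
    rw [this, hWal]
    ring
  have hInorm : ∀ n : ℕ, (∫ θ in Set.Ioc (0:ℝ) (π/2), ‖F n θ‖) = π/2 * (|c n| * aa n) * m ^ n := by
    intro n
    have : ∀ θ : ℝ, ‖F n θ‖ = |c n| * (m * Real.sin θ ^ 2) ^ n := by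
      intro θ
      rw [Real.norm_eq_abs, hF, abs_mul,
        abs_of_nonneg (pow_nonneg (mul_nonneg hm0 (sq_nonneg _)) n)]
    simp_rw [this]
    rw [← intervalIntegral.integral_of_le hpi2]
    have : (∫ θ in (0:ℝ)..(π/2), |c n| * (m * Real.sin θ ^ 2) ^ n)
        = |c n| * m ^ n * ∫ θ in (0:ℝ)..(π/2), (Real.sin θ ^ 2) ^ n := by
      rw [← intervalIntegral.integral_const_mul]
      apply intervalIntegral.integral_congr
      intro θ _
      show |c n| * (m * Real.sin θ ^ 2) ^ n = |c n| * m ^ n * (Real.sin θ ^ 2) ^ n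
      rw [mul_pow]
      ring
    rw [this, hWal]
    ring
  have hsum : Summable fun n => ∫ θ in Set.Ioc (0:ℝ) (π/2), ‖F n θ‖ := by
    apply Summable.of_nonneg_of_le
      (fun n => MeasureTheory.integral_nonneg (fun θ => norm_nonneg _))
      (fun n => ?_) ((summable_geometric_of_lt_one hm0 hm1).mul_left (π/2))
    rw [hInorm n]
    have h1 : |c n| * aa n ≤ 1 := by
      have := hc n
      have := aa_le_one n
      have := aa_pos n
      have := abs_nonneg (c n)
      nlinarith
    have h2 : (0:ℝ) ≤ π/2 * m ^ n := by positivity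
    calc π/2 * (|c n| * aa n) * m ^ n = (|c n| * aa n) * (π/2 * m ^ n) := by ring
      _ ≤ 1 * (π/2 * m ^ n) := mul_le_mul_of_nonneg_right h1 h2
      _ = π/2 * m ^ n := one_mul _
  have key := MeasureTheory.hasSum_integral_of_summable_integral_norm hFint hsum
  have htsum : ∀ θ : ℝ, (∑' n, F n θ) = g θ := fun θ => (hg θ).tsum_eq
  simp_rw [htsum] at key
  rw [intervalIntegral.integral_of_le hpi2]
  convert key using 1
  · rfl
  funext n
  rw [hIval n]

lemma sinsq_lt {m : ℝ} (hm0 : 0 ≤ m) (hm1 : m < 1) (θ : ℝ) :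
    0 ≤ m * Real.sin θ ^ 2 ∧ m * Real.sin θ ^ 2 < 1 := by
  constructor
  · exact mul_nonneg hm0 (sq_nonneg _)
  · have h1 : Real.sin θ ^ 2 ≤ 1 := Real.sin_sq_le_one θ
    nlinarith

lemma hasSum_K {m : ℝ} (hm0 : 0 ≤ m) (hm1 : m < 1) :
    HasSum (fun n => π/2 * (aa n * aa n) * m ^ n) (ellipticK m) := by
  apply hasSum_elliptic_aux aa (fun n => by rw [abs_of_nonneg (aa_pos n).le]) hm0 hm1
  intro θ
  obtain ⟨hx0, hx1⟩ := sinsq_lt hm0 hm1 θ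
  exact hasSum_inv_sqrt hx0 hx1

lemma hasSum_E {m : ℝ} (hm0 : 0 ≤ m) (hm1 : m < 1) :
    HasSum (fun n => π/2 * ((aa n / (1 - 2 * (n:ℝ))) * aa n) * m ^ n) (ellipticE m) := by
  apply hasSum_elliptic_aux (fun n => aa n / (1 - 2 * (n:ℝ))) (fun n => ?_) hm0 hm1
  · intro θ
    obtain ⟨hx0, hx1⟩ := sinsq_lt hm0 hm1 θ
    exact hasSum_sqrt hx0 hx1
  · have hd : (1:ℝ) ≤ |1 - 2 * (n:ℝ)| := by
      rcases Nat.eq_zero_or_pos n with h | h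
      · simp [h]
      · have : (1:ℝ) ≤ (n:ℝ) := by exact_mod_cast h
        rw [abs_of_nonpos (by linarith)]
        linarith
    rw [abs_div, abs_of_nonneg (aa_pos n).le]
    calc aa n / |1 - 2 * (n:ℝ)| ≤ aa n / 1 :=
          div_le_div_of_nonneg_left (aa_pos n).le one_pos hd
      _ = aa n := div_one _

noncomputable def cbR (n : ℕ) : ℝ := (Nat.centralBinom n : ℝ)

lemma cbR_zero : cbR 0 = 1 := by simp [cbR, Nat.centralBinom]

lemma cbR_rec (n : ℕ) : ((n:ℝ) + 1) * cbR (n + 1) = 2 * (2 * n + 1) * cbR n := by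
  have := Nat.succ_mul_centralBinom_succ n
  unfold cbR
  exact_mod_cast congrArg (Nat.cast : ℕ → ℝ) this

lemma catR (n : ℕ) : ((n:ℝ) + 1) * (catalan n : ℝ) = cbR n := by
  have := succ_mul_catalan_eq_centralBinom n
  unfold cbR
  exact_mod_cast congrArg (Nat.cast : ℕ → ℝ) this


end CatalanAux

/-- The generating function of the squared Catalan numbers:
`Σ c_n² zⁿ = (1/πz)E(16z) − ((1−16z)/2πz)K(16z) − 1/4z` for `0 < z < 1/16`. -/
theorem catalan_sq_genfn (z : ℝ) (h0 : 0 < z) (h1 : z < 1 / 16) :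
    (∑' n : ℕ, (catalan n : ℝ) ^ 2 * z ^ n) =
      (1 / (Real.pi * z)) * ellipticE (16 * z) -
        ((1 - 16 * z) / (2 * Real.pi * z)) * ellipticK (16 * z) - 1 / (4 * z) := by
  have hπ := Real.pi_pos
  have hπ' : π ≠ 0 := ne_of_gt hπ
  have hm0 : (0:ℝ) ≤ 16 * z := by positivity
  have hm1 : 16 * z < 1 := by linarith
  have hK := hasSum_K hm0 hm1
  have hE := hasSum_E hm0 hm1
  have hne : ∀ n : ℕ, (1 - 2 * (n:ℝ)) ≠ 0 := by
    intro n h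
    rcases Nat.eq_zero_or_pos n with h' | h'
    · simp [h'] at h
    · have : (1:ℝ) ≤ (n:ℝ) := by exact_mod_cast h'
      nlinarith
  have hb : ∀ n : ℕ, aa n * aa n * (16 * z) ^ n = (cbR n)^2 * z ^ n := by
    intro n
    have h16 : (16:ℝ) ^ n = 4 ^ n * 4 ^ n := by rw [← mul_pow]; norm_num
    have hmn : (16 * z) ^ n = 16 ^ n * z ^ n := by rw [mul_pow]
    rw [hmn, h16]
    unfold aa cbR
    have h4 : (4:ℝ) ^ n ≠ 0 := by positivity
    field_simp
  have hS1 : HasSum (fun n => (cbR n)^2 * z ^ n) (2/π * ellipticK (16 * z)) := by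
    have h := hK.mul_left (2/π)
    convert h using 1
    · rfl
    funext n
    rw [← hb n]
    field_simp
  have hS2 : HasSum (fun n => (cbR n)^2 * z ^ n / (1 - 2 * (n:ℝ)))
      (2/π * ellipticE (16 * z)) := by
    have h := hE.mul_left (2/π)
    convert h using 1
    · rfl
    funext n
    rw [← hb n]
    field_simp [hne n]
  set S1 := 2/π * ellipticK (16 * z) with hS1def
  set S2 := 2/π * ellipticE (16 * z) with hS2def
  set f : ℕ → ℝ := fun n => 2 * ((cbR n)^2 * z ^ n / (1 - 2 * (n:ℝ))) - (cbR n)^2 * z ^ n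
    with hf
  have hA : HasSum f (2 * S2 - S1) := (hS2.mul_left 2).sub hS1
  have hA' : HasSum (fun n => f (n + 1)) (2 * S2 - S1 - 1) := by
    apply (hasSum_nat_add_iff (f := f) 1).mpr
    convert hA using 1
    · rfl
    rw [Finset.sum_range_one, hf]
    simp [cbR_zero]
    norm_num
  have hB : HasSum (fun n => 16 * z * ((cbR n)^2 * z ^ n)) (16 * z * S1) :=
    hS1.mul_left (16 * z)
  have hC := hA'.add hB
  have hid : ∀ n : ℕ, f (n + 1) + 16 * z * ((cbR n)^2 * z ^ n)
      = 4 * z * ((catalan n : ℝ)^2 * z ^ n) := by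
    intro n
    have hrec := cbR_rec n
    have hcat := catR n
    have hn1 : ((n:ℝ) + 1) ≠ 0 := by positivity
    have e1 : cbR (n + 1) = 2 * (2 * n + 1) * cbR n / ((n:ℝ) + 1) := by
      field_simp; linarith [hrec]
    have e2 : (catalan n : ℝ) = cbR n / ((n:ℝ) + 1) := by
      field_simp; linarith [hcat]
    rw [hf]
    simp only []
    rw [e1, e2]
    have hden : (1 - 2 * (((n+1):ℕ):ℝ)) ≠ 0 := hne (n+1)
    push_cast at hden ⊢
    have hq : (2 * (n:ℝ) + 1) ≠ 0 := by positivity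
    field_simp
    rw [pow_succ]
    ring
  have hC' : HasSum (fun n => 4 * z * ((catalan n : ℝ)^2 * z ^ n))
      (2 * S2 - S1 - 1 + 16 * z * S1) := by
    convert hC using 1
    funext n
    rw [← hid n]
  have hz : z ≠ 0 := ne_of_gt h0
  have hfinal : HasSum (fun n => (catalan n : ℝ)^2 * z ^ n)
      ((2 * S2 - S1 - 1 + 16 * z * S1) / (4 * z)) := by
    have h := hC'.div_const (4 * z)
    convert h using 1
    · rfl
    funext n
    field_simp
  rw [hfinal.tsum_eq, hS1def, hS2def]
  field_simp
  ring
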